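/- Let A and B be Boolean frames, and let A × B be their product (componentwise Boolean operations and unary operation (a, b) ↦ (f_A(a), f_B(b))). If HS(A) = SH(A) and HS(B) = SH(B), then HS(A × B) = SH(A × B). -/

import Mathlib

universe u v

/-- A congruence of the Boolean frame `(α, f)`: an equivalence relation compatible
with the Boolean operations and with `f`. -/
structure IsCongr {α : Type u} [BooleanAlgebra α] (f : α → α) (Θ : α → α → Prop) : Prop where
  refl : ∀ x, Θ x x
  symm : ∀ {x y}, Θ x y → Θ y x
  trans : ∀ {x y z}, Θ x y → Θ y z → Θ x z
  inf : ∀ {x y x' y'}, Θ x y → Θ x' y' → Θ (x ⊓ x') (y ⊓ y')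
  compl : ∀ {x y}, Θ x y → Θ xᶜ yᶜ
  map : ∀ {x y}, Θ x y → Θ (f x) (f y)

/-- `B` is (the universe of) a subalgebra of the Boolean frame `(α, f)`:
it contains `⊥` and is closed under `⊓`, complement and `f`. -/
def IsSubalg {α : Type u} [BooleanAlgebra α] (f : α → α) (B : Set α) : Prop :=
  ⊥ ∈ B ∧ (∀ x ∈ B, ∀ y ∈ B, x ⊓ y ∈ B) ∧ (∀ x ∈ B, xᶜ ∈ B) ∧ (∀ x ∈ B, f x ∈ B)

/-- A congruence of the Boolean frame whose universe is the subset `B` of `α`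
(with the operations restricted from `(α, f)`), encoded as a relation on `α`
whose domain is contained in `B`. -/
structure IsCongrOn {α : Type u} [BooleanAlgebra α] (f : α → α) (B : Set α)
    (Θ : α → α → Prop) : Prop where
  dom : ∀ {x y}, Θ x y → x ∈ B ∧ y ∈ B
  refl : ∀ x ∈ B, Θ x x
  symm : ∀ {x y}, Θ x y → Θ y x
  trans : ∀ {x y z}, Θ x y → Θ y z → Θ x z
  inf : ∀ {x y x' y'}, Θ x y → Θ x' y' → Θ (x ⊓ x') (y ⊓ y')
  compl : ∀ {x y}, Θ x y → Θ xᶜ yᶜ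
  map : ∀ {x y}, Θ x y → Θ (f x) (f y)

/-- The Boolean frame `(α, f)` has the congruence extension property: every congruence
of every subalgebra is the restriction of a congruence of the whole frame. -/
def HasCEP {α : Type u} [BooleanAlgebra α] (f : α → α) : Prop :=
  ∀ B : Set α, IsSubalg f B → ∀ Θ : α → α → Prop, IsCongrOn f B Θ →
    ∃ Ψ : α → α → Prop, IsCongr f Ψ ∧ ∀ x y, Θ x y ↔ (Ψ x y ∧ x ∈ B ∧ y ∈ B)

/-- `φ` is a homomorphism of Boolean frames `(α, f) → (β, g)`. -/
def IsHom {α : Type u} {β : Type v} [BooleanAlgebra α] [BooleanAlgebra β]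
    (f : α → α) (g : β → β) (φ : α → β) : Prop :=
  φ ⊥ = ⊥ ∧ (∀ x y, φ (x ⊓ y) = φ x ⊓ φ y) ∧ (∀ x, φ xᶜ = (φ x)ᶜ) ∧ ∀ x, φ (f x) = g (φ x)

/-- `(δ, g) ∈ HS(α, f)`: `(δ, g)` is a homomorphic image of a subalgebra of `(α, f)`. -/
def MemHS {α δ : Type u} [BooleanAlgebra α] [BooleanAlgebra δ] (f : α → α) (g : δ → δ) : Prop :=
  ∃ (γ : Type u) (iγ : BooleanAlgebra γ) (h : γ → γ) (i : γ → α) (s : γ → δ),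
    @IsHom γ α iγ _ h f i ∧ Function.Injective i ∧
    @IsHom γ δ iγ _ h g s ∧ Function.Surjective s

/-- `(δ, g) ∈ SH(α, f)`: `(δ, g)` embeds into a homomorphic image of `(α, f)`. -/
def MemSH {α δ : Type u} [BooleanAlgebra α] [BooleanAlgebra δ] (f : α → α) (g : δ → δ) : Prop :=
  ∃ (γ : Type u) (iγ : BooleanAlgebra γ) (h : γ → γ) (s : α → γ) (i : δ → γ),
    @IsHom α γ _ iγ f h s ∧ Function.Surjective s ∧
    @IsHom δ γ _ iγ g h i ∧ Function.Injective i

set_option linter.unusedSectionVars false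

section Helpers

variable {α : Type u} {β : Type v} [BooleanAlgebra α] [BooleanAlgebra β]

lemma IsCongr.sup' {f : α → α} {Θ : α → α → Prop} (h : IsCongr f Θ) {x y x' y' : α}
    (h1 : Θ x y) (h2 : Θ x' y') : Θ (x ⊔ x') (y ⊔ y') := by
  have := h.compl (h.inf (h.compl h1) (h.compl h2))
  simpa [compl_inf, compl_compl] using this

lemma IsHom.sup {f : α → α} {g : β → β} {φ : α → β} (h : IsHom f g φ) (x y : α) :
    φ (x ⊔ y) = φ x ⊔ φ y := by
  have h1 : x ⊔ y = (xᶜ ⊓ yᶜ)ᶜ := by simp [compl_inf]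
  rw [h1, h.2.2.1, h.2.1, h.2.2.1, h.2.2.1, compl_inf, compl_compl, compl_compl]

lemma IsHom.top {f : α → α} {g : β → β} {φ : α → β} (h : IsHom f g φ) : φ ⊤ = ⊤ := by
  rw [← compl_bot, h.2.2.1, h.1, compl_bot]

lemma isCongr_ker {f : α → α} {g : β → β} {φ : α → β} (h : IsHom f g φ) :
    IsCongr f (fun x y => φ x = φ y) where
  refl _ := rfl
  symm h1 := h1.symm
  trans h1 h2 := h1.trans h2
  inf h1 h2 := by simp only [h.2.1]; rw [h1, h2]
  compl h1 := by simp only [h.2.2.1]; rw [h1]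
  map h1 := by simp only [h.2.2.2]; rw [h1]

end Helpers

section Join

variable {α : Type u} [BooleanAlgebra α]

abbrev RelJoin (R S : α → α → Prop) : α → α → Prop :=
  Relation.ReflTransGen (fun x y => R x y ∨ S x y)

lemma relJoin_left {R S : α → α → Prop} {x y : α} (h : R x y) : RelJoin R S x y :=
  Relation.ReflTransGen.single (Or.inl h)

lemma relJoin_right {R S : α → α → Prop} {x y : α} (h : S x y) : RelJoin R S x y :=
  Relation.ReflTransGen.single (Or.inr h)

lemma relJoin_le {R S Θ : α → α → Prop} (hrefl : ∀ x, Θ x x)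
    (htrans : ∀ {x y z}, Θ x y → Θ y z → Θ x z)
    (hR : ∀ x y, R x y → Θ x y) (hS : ∀ x y, S x y → Θ x y)
    {x y : α} (h : RelJoin R S x y) : Θ x y := by
  induction h with
  | refl => exact hrefl _
  | tail _ step ih =>
    rcases step with hr | hs
    · exact htrans ih (hR _ _ hr)
    · exact htrans ih (hS _ _ hs)

lemma RelJoin.mono_map {R S R' S' : α → α → Prop} (F : α → α)
    (hR : ∀ x y, R x y → R' (F x) (F y)) (hS : ∀ x y, S x y → S' (F x) (F y))
    {x y : α} (h : RelJoin R S x y) : RelJoin R' S' (F x) (F y) := by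
  induction h with
  | refl => exact Relation.ReflTransGen.refl
  | tail _ step ih =>
    rcases step with hr | hs
    · exact ih.tail (Or.inl (hR _ _ hr))
    · exact ih.tail (Or.inr (hS _ _ hs))

lemma isCongr_relJoin {f : α → α} {R S : α → α → Prop}
    (hR : IsCongr f R) (hS : IsCongr f S) : IsCongr f (RelJoin R S) where
  refl _ := Relation.ReflTransGen.refl
  symm h := by
    induction h with
    | refl => exact Relation.ReflTransGen.refl
    | tail _ step ih =>
      exact Relation.ReflTransGen.trans
        (Relation.ReflTransGen.single (step.imp hR.symm hS.symm)) ih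
  trans h1 h2 := h1.trans h2
  inf {x y x' y'} h1 h2 :=
    Relation.ReflTransGen.trans
      (RelJoin.mono_map (· ⊓ x') (fun _ _ hr => hR.inf hr (hR.refl x'))
        (fun _ _ hs => hS.inf hs (hS.refl x')) h1)
      (RelJoin.mono_map (y ⊓ ·) (fun _ _ hr => hR.inf (hR.refl y) hr)
        (fun _ _ hs => hS.inf (hS.refl y) hs) h2)
  compl h := RelJoin.mono_map compl (fun _ _ hr => hR.compl hr) (fun _ _ hs => hS.compl hs) h
  map h := RelJoin.mono_map f (fun _ _ hr => hR.map hr) (fun _ _ hs => hS.map hs) h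

lemma key_distrib {f : α → α} {Θ Φ Ψ : α → α → Prop}
    (hΘ : IsCongr f Θ) (hΦ : IsCongr f Φ) (hΨ : IsCongr f Ψ) {x y : α}
    (hxy : Θ x y) (hj : RelJoin Φ Ψ x y) :
    RelJoin (fun a b => Θ a b ∧ Φ a b) (fun a b => Θ a b ∧ Ψ a b) x y := by
  have hmy : Θ (x ⊓ y) y := by
    have := hΘ.inf hxy (hΘ.refl y); simpa using this
  have hjy : Θ (x ⊔ y) y := by
    have := hΘ.sup' hxy (hΘ.refl y); simpa using this
  have hmj : Θ (x ⊓ y) (x ⊔ y) := hΘ.trans hmy (hΘ.symm hjy)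
  have hw : ∀ z, Θ (x ⊓ y) ((z ⊔ x ⊓ y) ⊓ (x ⊔ y)) := fun z => by
    have h1 := hΘ.inf (hΘ.refl (z ⊔ x ⊓ y)) hmj
    rwa [inf_eq_right.2 le_sup_right] at h1
  have main : ∀ z : α, Relation.ReflTransGen (fun a b => Φ a b ∨ Ψ a b) x z →
      RelJoin (fun a b => Θ a b ∧ Φ a b) (fun a b => Θ a b ∧ Ψ a b)
        ((x ⊔ x ⊓ y) ⊓ (x ⊔ y)) ((z ⊔ x ⊓ y) ⊓ (x ⊔ y)) := by
    intro z hz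
    induction hz with
    | refl => exact Relation.ReflTransGen.refl
    | @tail b c _ step ih =>
      have hθ : Θ ((b ⊔ x ⊓ y) ⊓ (x ⊔ y)) ((c ⊔ x ⊓ y) ⊓ (x ⊔ y)) :=
        hΘ.trans (hΘ.symm (hw b)) (hw c)
      rcases step with hr | hs
      · exact ih.tail (Or.inl ⟨hθ, hΦ.inf (hΦ.sup' hr (hΦ.refl _)) (hΦ.refl _)⟩)
      · exact ih.tail (Or.inr ⟨hθ, hΨ.inf (hΨ.sup' hs (hΨ.refl _)) (hΨ.refl _)⟩)
  have hx : (x ⊔ x ⊓ y) ⊓ (x ⊔ y) = x := by rw [sup_inf_self, inf_sup_self]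
  have hy : (y ⊔ x ⊓ y) ⊓ (x ⊔ y) = y := by
    rw [inf_comm x y, sup_inf_self, sup_comm x y, inf_sup_self]
  have := main y hj
  rwa [hx, hy] at this

end Join

section QuotFrame

variable {α : Type u} [BooleanAlgebra α] {f : α → α} {Θ : α → α → Prop}

def congrSetoid (h : IsCongr f Θ) : Setoid α :=
  ⟨Θ, ⟨h.refl, fun ha => h.symm ha, fun ha hb => h.trans ha hb⟩⟩

variable (h : IsCongr f Θ)

def qmk (x : α) : Quotient (congrSetoid h) := Quotient.mk (congrSetoid h) x

instance : Min (Quotient (congrSetoid h)) :=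
  ⟨Quotient.map₂ (· ⊓ ·) (fun _ _ h1 _ _ h2 => h.inf h1 h2)⟩

instance : Max (Quotient (congrSetoid h)) :=
  ⟨Quotient.map₂ (· ⊔ ·) (fun _ _ h1 _ _ h2 => h.sup' h1 h2)⟩

instance : Compl (Quotient (congrSetoid h)) :=
  ⟨Quotient.map (·ᶜ) (fun _ _ h1 => h.compl h1)⟩

instance : Top (Quotient (congrSetoid h)) := ⟨qmk h ⊤⟩
instance : Bot (Quotient (congrSetoid h)) := ⟨qmk h ⊥⟩

def qmap : Quotient (congrSetoid h) → Quotient (congrSetoid h) :=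
  Quotient.map f (fun _ _ h1 => h.map h1)

@[simp] lemma qmk_inf (x y : α) : qmk h x ⊓ qmk h y = qmk h (x ⊓ y) := rfl
@[simp] lemma qmk_sup (x y : α) : qmk h x ⊔ qmk h y = qmk h (x ⊔ y) := rfl
@[simp] lemma qmk_compl (x : α) : (qmk h x)ᶜ = qmk h xᶜ := rfl
@[simp] lemma qmk_map (x : α) : qmap h (qmk h x) = qmk h (f x) := rfl

lemma qmk_surjective : Function.Surjective (qmk h) := fun q =>
  Quotient.inductionOn q fun x => ⟨x, rfl⟩

lemma qmk_eq {x y : α} : qmk h x = qmk h y ↔ Θ x y :=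
  ⟨fun he => Quotient.exact he, fun he => Quotient.sound he⟩

instance : Lattice (Quotient (congrSetoid h)) :=
  Lattice.mk'
    (fun a b => Quotient.inductionOn₂ a b fun x y =>
      congrArg (qmk h) (sup_comm x y))
    (fun a b c => Quotient.inductionOn₃ a b c fun x y z =>
      congrArg (qmk h) (sup_assoc x y z))
    (fun a b => Quotient.inductionOn₂ a b fun x y =>
      congrArg (qmk h) (inf_comm x y))
    (fun a b c => Quotient.inductionOn₃ a b c fun x y z =>
      congrArg (qmk h) (inf_assoc x y z))
    (fun a b => Quotient.inductionOn₂ a b fun x y =>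
      congrArg (qmk h) (sup_inf_self (a := x) (b := y)))
    (fun a b => Quotient.inductionOn₂ a b fun x y =>
      congrArg (qmk h) (inf_sup_self (a := x) (b := y)))

instance : DistribLattice (Quotient (congrSetoid h)) where
  le_sup_inf a b c := by
    refine Quotient.inductionOn₃ a b c fun x y z => sup_eq_right.1 ?_
    exact congrArg (qmk h) (sup_eq_right.2 le_sup_inf)

instance : BooleanAlgebra (Quotient (congrSetoid h)) where
  __ := (inferInstance : DistribLattice (Quotient (congrSetoid h)))
  compl := (·ᶜ)
  top := ⊤
  bot := ⊥
  inf_compl_le_bot a := Quotient.inductionOn a fun x =>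
    sup_eq_right.1 (congrArg (qmk h) (by simp))
  top_le_sup_compl a := Quotient.inductionOn a fun x =>
    sup_eq_right.1 (congrArg (qmk h) (by simp))
  le_top a := Quotient.inductionOn a fun x =>
    sup_eq_right.1 (congrArg (qmk h) (by simp))
  bot_le a := Quotient.inductionOn a fun x =>
    sup_eq_right.1 (congrArg (qmk h) (by simp))

lemma qmk_isHom : IsHom f (qmap h) (qmk h) :=
  ⟨rfl, fun _ _ => rfl, fun _ => rfl, fun _ => rfl⟩

end QuotFrame

section Pullback

theorem memSH_imp_memHS {α δ : Type u} [iα : BooleanAlgebra α] [iδ : BooleanAlgebra δ]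
    {f : α → α} {g : δ → δ} (h : @MemSH α δ iα iδ f g) : @MemHS α δ iα iδ f g := by
  obtain ⟨γ, iγ, hγ, s, i, hs, hssurj, hi, hiinj⟩ := h
  let P := {p : α × δ // s p.1 = i p.2}
  letI : Min P := ⟨fun p q => ⟨p.1 ⊓ q.1, by
    show s (p.1.1 ⊓ q.1.1) = i (p.1.2 ⊓ q.1.2)
    rw [hs.2.1, hi.2.1, p.2, q.2]⟩⟩
  letI : Max P := ⟨fun p q => ⟨p.1 ⊔ q.1, by
    show s (p.1.1 ⊔ q.1.1) = i (p.1.2 ⊔ q.1.2)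
    rw [hs.sup, hi.sup, p.2, q.2]⟩⟩
  letI : Compl P := ⟨fun p => ⟨(p.1)ᶜ, by
    show s (p.1.1)ᶜ = i (p.1.2)ᶜ
    rw [hs.2.2.1, hi.2.2.1, p.2]⟩⟩
  letI : Top P := ⟨⟨⊤, by show s ⊤ = i ⊤; rw [hs.top, hi.top]⟩⟩
  letI : Bot P := ⟨⟨⊥, by show s ⊥ = i ⊥; rw [hs.1, hi.1]⟩⟩
  letI : SDiff P := ⟨fun p q => ⟨p.1 \ q.1, by
    show s (p.1.1 \ q.1.1) = i (p.1.2 \ q.1.2)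
    rw [sdiff_eq, sdiff_eq, hs.2.1, hi.2.1, hs.2.2.1, hi.2.2.1, p.2, q.2]⟩⟩
  letI : HImp P := ⟨fun p q => ⟨p.1 ⇨ q.1, by
    show s (p.1.1 ⇨ q.1.1) = i (p.1.2 ⇨ q.1.2)
    rw [himp_eq, himp_eq, hs.sup, hi.sup, hs.2.2.1, hi.2.2.1, p.2, q.2]⟩⟩
  letI instP : BooleanAlgebra P :=
    Function.Injective.booleanAlgebra (Subtype.val : P → α × δ) Subtype.coe_injective Iff.rfl Iff.rfl
      (fun _ _ => rfl) (fun _ _ => rfl) rfl rfl (fun _ => rfl) (fun _ _ => rfl) (fun _ _ => rfl)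
  let hP : P → P := fun p => ⟨(f p.1.1, g p.1.2), by
    show s (f p.1.1) = i (g p.1.2)
    rw [hs.2.2.2, hi.2.2.2, p.2]⟩
  refine ⟨P, instP, hP, fun p => p.1.1, fun p => p.1.2, ?_, ?_, ?_, ?_⟩
  · exact ⟨rfl, fun _ _ => rfl, fun _ => rfl, fun _ => rfl⟩
  · intro p q hpq
    refine Subtype.ext (Prod.ext hpq (hiinj ?_))
    rw [← p.2, ← q.2]
    exact congrArg s hpq
  · exact ⟨rfl, fun _ _ => rfl, fun _ => rfl, fun _ => rfl⟩
  · intro d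
    obtain ⟨a, ha⟩ := hssurj (i d)
    exact ⟨⟨(a, d), ha⟩, rfl⟩

end Pullback


/-- if `HS(A) = SH(A)` and `HS(B) = SH(B)` for Boolean frames `A`, `B`,
then `HS(A × B) = SH(A × B)` for the product frame. -/
theorem stmt_7 {α β : Type u} [iα : BooleanAlgebra α] [iβ : BooleanAlgebra β]
    (fA : α → α) (fB : β → β)
    (hA : ∀ (δ : Type u) (iδ : BooleanAlgebra δ) (g : δ → δ),
      @MemHS α δ iα iδ fA g ↔ @MemSH α δ iα iδ fA g)
    (hB : ∀ (δ : Type u) (iδ : BooleanAlgebra δ) (g : δ → δ),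
      @MemHS β δ iβ iδ fB g ↔ @MemSH β δ iβ iδ fB g) :
    ∀ (δ : Type u) (iδ : BooleanAlgebra δ) (g : δ → δ),
      @MemHS (α × β) δ _ iδ (fun p => (fA p.1, fB p.2)) g ↔
        @MemSH (α × β) δ _ iδ (fun p => (fA p.1, fB p.2)) g := by
  intro δ iδ g
  letI := iδ
  constructor
  · intro hHS
    obtain ⟨γ, iγ, hγ, i, s, hi, hiinj, hs, hssurj⟩ := hHS
    letI := iγ
    -- projections composed with i
    let a1 : γ → α := fun c => (i c).1
    let a2 : γ → β := fun c => (i c).2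
    have ha1 : IsHom hγ fA a1 := by
      refine ⟨?_, ?_, ?_, ?_⟩
      · show (i ⊥).1 = ⊥; rw [hi.1]; rfl
      · intro x y; show (i (x ⊓ y)).1 = (i x).1 ⊓ (i y).1; rw [hi.2.1]; rfl
      · intro x; show (i xᶜ).1 = ((i x).1)ᶜ; rw [hi.2.2.1]; rfl
      · intro x; show (i (hγ x)).1 = fA (i x).1; rw [hi.2.2.2]
    have ha2 : IsHom hγ fB a2 := by
      refine ⟨?_, ?_, ?_, ?_⟩
      · show (i ⊥).2 = ⊥; rw [hi.1]; rfl
      · intro x y; show (i (x ⊓ y)).2 = (i x).2 ⊓ (i y).2; rw [hi.2.1]; rfl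
      · intro x; show (i xᶜ).2 = ((i x).2)ᶜ; rw [hi.2.2.1]; rfl
      · intro x; show (i (hγ x)).2 = fB (i x).2; rw [hi.2.2.2]
    -- congruences
    let θ : γ → γ → Prop := fun c c' => s c = s c'
    let η₁ : γ → γ → Prop := fun c c' => a1 c = a1 c'
    let η₂ : γ → γ → Prop := fun c c' => a2 c = a2 c'
    have hθ : IsCongr hγ θ := isCongr_ker hs
    have hη₁ : IsCongr hγ η₁ := isCongr_ker ha1
    have hη₂ : IsCongr hγ η₂ := isCongr_ker ha2
    have hφ₁ : IsCongr hγ (RelJoin θ η₁) := isCongr_relJoin hθ hη₁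
    have hφ₂ : IsCongr hγ (RelJoin θ η₂) := isCongr_relJoin hθ hη₂
    -- the meet of the two joins is θ
    have step2 : ∀ u v : γ, η₂ u v → RelJoin θ η₁ u v → θ u v := by
      intro u v huv hj
      have hkey := key_distrib hη₂ hθ hη₁ huv hj
      refine relJoin_le (Θ := θ) (fun _ => rfl) (fun h1 h2 => h1.trans h2) ?_ ?_ hkey
      · exact fun _ _ hp => hp.2
      · intro x y hp
        have hxy : x = y := hiinj (Prod.ext hp.2 hp.1)
        rw [hxy]
    have meet : ∀ c c' : γ, RelJoin θ η₁ c c' → RelJoin θ η₂ c c' → θ c c' := by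
      intro c c' h1 h2
      have hkey := key_distrib hφ₁ hθ hη₂ h1 h2
      refine relJoin_le (Θ := θ) (fun _ => rfl) (fun hx hy => hx.trans hy) ?_ ?_ hkey
      · exact fun _ _ hp => hp.2
      · exact fun u v hp => step2 u v hp.2 hp.1
    -- quotient frames
    have memHS1 : @MemHS α (Quotient (congrSetoid hφ₁)) iα _ fA (qmap hφ₁) := by
      refine ⟨Quotient (congrSetoid hη₁), inferInstance, qmap hη₁,
        Quotient.lift a1 (fun u v huv => huv),
        Quotient.map id (fun u v huv => relJoin_right huv), ?_, ?_, ?_, ?_⟩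
      · refine ⟨ha1.1, ?_, ?_, ?_⟩
        · intro x y
          exact Quotient.inductionOn₂ x y fun u v => ha1.2.1 u v
        · intro x; exact Quotient.inductionOn x fun u => ha1.2.2.1 u
        · intro x; exact Quotient.inductionOn x fun u => ha1.2.2.2 u
      · intro x y
        refine Quotient.inductionOn₂ x y fun u v huv => Quotient.sound ?_
        exact huv
      · exact ⟨rfl, fun x y => Quotient.inductionOn₂ x y fun u v => rfl,
          fun x => Quotient.inductionOn x fun u => rfl,
          fun x => Quotient.inductionOn x fun u => rfl⟩
      · intro q; exact Quotient.inductionOn q fun u => ⟨Quotient.mk _ u, rfl⟩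
    have memHS2 : @MemHS β (Quotient (congrSetoid hφ₂)) iβ _ fB (qmap hφ₂) := by
      refine ⟨Quotient (congrSetoid hη₂), inferInstance, qmap hη₂,
        Quotient.lift a2 (fun u v huv => huv),
        Quotient.map id (fun u v huv => relJoin_right huv), ?_, ?_, ?_, ?_⟩
      · refine ⟨ha2.1, ?_, ?_, ?_⟩
        · intro x y
          exact Quotient.inductionOn₂ x y fun u v => ha2.2.1 u v
        · intro x; exact Quotient.inductionOn x fun u => ha2.2.2.1 u
        · intro x; exact Quotient.inductionOn x fun u => ha2.2.2.2 u
      · intro x y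
        refine Quotient.inductionOn₂ x y fun u v huv => Quotient.sound ?_
        exact huv
      · exact ⟨rfl, fun x y => Quotient.inductionOn₂ x y fun u v => rfl,
          fun x => Quotient.inductionOn x fun u => rfl,
          fun x => Quotient.inductionOn x fun u => rfl⟩
      · intro q; exact Quotient.inductionOn q fun u => ⟨Quotient.mk _ u, rfl⟩
    obtain ⟨E1, iE1, gE1, t1, j1, ht1, ht1s, hj1, hj1i⟩ :=
      (hA (Quotient (congrSetoid hφ₁)) _ (qmap hφ₁)).1 memHS1
    obtain ⟨E2, iE2, gE2, t2, j2, ht2, ht2s, hj2, hj2i⟩ :=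
      (hB (Quotient (congrSetoid hφ₂)) _ (qmap hφ₂)).1 memHS2
    letI := iE1; letI := iE2
    -- choice of preimages under s
    let c : δ → γ := fun d => (hssurj d).choose
    have hc : ∀ d, s (c d) = d := fun d => (hssurj d).choose_spec
    have hq1 : ∀ {u v : γ}, θ u v → qmk hφ₁ u = qmk hφ₁ v :=
      fun huv => Quotient.sound (relJoin_left huv)
    have hq2 : ∀ {u v : γ}, θ u v → qmk hφ₂ u = qmk hφ₂ v :=
      fun huv => Quotient.sound (relJoin_left huv)
    refine ⟨E1 × E2, inferInstance, fun p => (gE1 p.1, gE2 p.2),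
      fun p => (t1 p.1, t2 p.2),
      fun d => (j1 (qmk hφ₁ (c d)), j2 (qmk hφ₂ (c d))), ?_, ?_, ?_, ?_⟩
    · refine ⟨?_, ?_, ?_, ?_⟩
      · show (t1 ⊥, t2 ⊥) = ⊥; rw [ht1.1, ht2.1]; rfl
      · intro x y
        show (t1 (x.1 ⊓ y.1), t2 (x.2 ⊓ y.2)) = _
        rw [ht1.2.1, ht2.2.1]; rfl
      · intro x
        show (t1 (x.1)ᶜ, t2 (x.2)ᶜ) = _
        rw [ht1.2.2.1, ht2.2.2.1]; rfl
      · intro x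
        show (t1 (fA x.1), t2 (fB x.2)) = _
        rw [ht1.2.2.2, ht2.2.2.2]
    · intro p
      obtain ⟨a, ha⟩ := ht1s p.1
      obtain ⟨b, hb⟩ := ht2s p.2
      exact ⟨(a, b), by simp [ha, hb]⟩
    · refine ⟨?_, ?_, ?_, ?_⟩
      · have h1 : θ (c ⊥) ⊥ := by show s (c ⊥) = s ⊥; rw [hc, hs.1]
        show (j1 (qmk hφ₁ (c ⊥)), j2 (qmk hφ₂ (c ⊥))) = ⊥
        rw [hq1 h1, hq2 h1]
        show (j1 ⊥, j2 ⊥) = ⊥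
        rw [hj1.1, hj2.1]; rfl
      · intro x y
        have h1 : θ (c (x ⊓ y)) (c x ⊓ c y) := by
          show s (c (x ⊓ y)) = s (c x ⊓ c y)
          rw [hc, hs.2.1, hc, hc]
        show (j1 (qmk hφ₁ (c (x ⊓ y))), j2 (qmk hφ₂ (c (x ⊓ y)))) = _
        rw [hq1 h1, hq2 h1]
        show (j1 (qmk hφ₁ (c x) ⊓ qmk hφ₁ (c y)), j2 (qmk hφ₂ (c x) ⊓ qmk hφ₂ (c y))) = _
        rw [hj1.2.1, hj2.2.1]; rfl
      · intro x
        have h1 : θ (c xᶜ) (c x)ᶜ := by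
          show s (c xᶜ) = s (c x)ᶜ
          rw [hc, hs.2.2.1, hc]
        show (j1 (qmk hφ₁ (c xᶜ)), j2 (qmk hφ₂ (c xᶜ))) = _
        rw [hq1 h1, hq2 h1]
        show (j1 (qmk hφ₁ (c x))ᶜ, j2 (qmk hφ₂ (c x))ᶜ) = _
        rw [hj1.2.2.1, hj2.2.2.1]; rfl
      · intro x
        have h1 : θ (c (g x)) (hγ (c x)) := by
          show s (c (g x)) = s (hγ (c x))
          rw [hc, hs.2.2.2, hc]
        show (j1 (qmk hφ₁ (c (g x))), j2 (qmk hφ₂ (c (g x)))) = _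
        rw [hq1 h1, hq2 h1]
        show (j1 (qmap hφ₁ (qmk hφ₁ (c x))), j2 (qmap hφ₂ (qmk hφ₂ (c x)))) = _
        rw [hj1.2.2.2, hj2.2.2.2]
    · intro d d' hdd
      have h1 : j1 (qmk hφ₁ (c d)) = j1 (qmk hφ₁ (c d')) := congrArg Prod.fst hdd
      have h2 : j2 (qmk hφ₂ (c d)) = j2 (qmk hφ₂ (c d')) := congrArg Prod.snd hdd
      have hp1 : RelJoin θ η₁ (c d) (c d') := Quotient.exact (hj1i h1)
      have hp2 : RelJoin θ η₂ (c d) (c d') := Quotient.exact (hj2i h2)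
      have := meet _ _ hp1 hp2
      rw [← hc d, ← hc d']
      exact this
  · exact memSH_imp_memHS
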